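/- Define F(ν) = β·ν² + erfc(ν/√2)·(1 − ν²) + (2ν/√(2π))·e^{−ν²/2} for ν ≥ 0 and β ∈ (0,1). Then F attains its minimum over ν ≥ 0 at ν* = √2·erfinv(1−β), and the minimum value equals β + (2·erfinv(1−β))/(√π·e^{(erfinv(1−β))²}). -/

import Mathlib

noncomputable def erf (t : ℝ) : ℝ := (2 / Real.sqrt Real.pi) * ∫ s in (0:ℝ)..t, Real.exp (-s ^ 2)

noncomputable def erfc (t : ℝ) : ℝ := 1 - erf t

noncomputable def erfinv : ℝ → ℝ := Function.invFun erf

open Real MeasureTheory intervalIntegral Filter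

lemma exp_sq_cont : Continuous (fun s : ℝ => Real.exp (-s ^ 2)) := by
  continuity

lemma erf_hasDerivAt (x : ℝ) :
    HasDerivAt erf ((2 / Real.sqrt Real.pi) * Real.exp (-x ^ 2)) x := by
  have h : HasDerivAt (fun t => ∫ s in (0:ℝ)..t, Real.exp (-s ^ 2)) (Real.exp (-x ^ 2)) x :=
    integral_hasDerivAt_right (exp_sq_cont.intervalIntegrable _ _)
      (exp_sq_cont.aestronglyMeasurable.stronglyMeasurableAtFilter)
      exp_sq_cont.continuousAt
  exact h.const_mul _

lemma erf_strictMono : StrictMono erf := by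
  have := Real.pi_pos
  apply strictMono_of_deriv_pos
  intro x
  rw [(erf_hasDerivAt x).deriv]
  positivity

lemma erf_zero : erf 0 = 0 := by simp [erf]

lemma erf_tendsto : Tendsto erf atTop (nhds 1) := by
  have hint : IntegrableOn (fun s : ℝ => Real.exp (-s ^ 2)) (Set.Ioi 0) := by
    have := (integrable_exp_neg_mul_sq (one_pos)).integrableOn (s := Set.Ioi (0:ℝ))
    simpa using this
  have h1 : Tendsto (fun t : ℝ => ∫ s in (0:ℝ)..t, Real.exp (-s ^ 2)) atTop
      (nhds (∫ s in Set.Ioi (0:ℝ), Real.exp (-s ^ 2))) :=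
    intervalIntegral_tendsto_integral_Ioi 0 hint tendsto_id
  have h2 : (∫ s in Set.Ioi (0:ℝ), Real.exp (-s ^ 2)) = Real.sqrt Real.pi / 2 := by
    have := integral_gaussian_Ioi 1
    simpa using this
  have h3 := (h1.const_mul (2 / Real.sqrt Real.pi))
  rw [h2] at h3
  have hπ : Real.sqrt Real.pi ≠ 0 := by positivity
  have : (2 / Real.sqrt Real.pi) * (Real.sqrt Real.pi / 2) = 1 := by field_simp
  rw [this] at h3
  exact h3

lemma erf_continuous : Continuous erf := by
  have : Differentiable ℝ erf := fun x => (erf_hasDerivAt x).differentiableAt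
  exact this.continuous

lemma erf_erfinv {y : ℝ} (hy : y ∈ Set.Ioo (0:ℝ) 1) : erf (erfinv y) = y := by
  obtain ⟨t, ht⟩ : ∃ t : ℝ, y < erf t := by
    have h := erf_tendsto.eventually (eventually_gt_nhds hy.2)
    obtain ⟨t, ht⟩ := h.exists
    exact ⟨t, ht⟩
  have hmem : y ∈ Set.Icc (erf 0) (erf t) := ⟨by rw [erf_zero]; exact hy.1.le, ht.le⟩
  have h0t : (0:ℝ) ≤ t := le_of_lt (erf_strictMono.lt_iff_lt.mp (by rw [erf_zero]; linarith [hy.1]))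
  obtain ⟨a, _, ha⟩ := intermediate_value_Icc h0t erf_continuous.continuousOn hmem
  exact Function.invFun_eq ⟨a, ha⟩

lemma erfinv_pos {y : ℝ} (hy : y ∈ Set.Ioo (0:ℝ) 1) : 0 < erfinv y := by
  have h := erf_erfinv hy
  by_contra hle
  push_neg at hle
  have := erf_strictMono.monotone hle
  rw [h, erf_zero] at this
  linarith [hy.1]

lemma F_hasDerivAt (β ν : ℝ) :
    HasDerivAt (fun ν => β * ν ^ 2 + erfc (ν / Real.sqrt 2) * (1 - ν ^ 2) +
      (2 * ν / Real.sqrt (2 * Real.pi)) * Real.exp (-ν ^ 2 / 2))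
      (2 * ν * (β - erfc (ν / Real.sqrt 2))) ν := by
  have h2 : (0:ℝ) < Real.sqrt 2 := by positivity
  have hπ : (0:ℝ) < Real.sqrt Real.pi := Real.sqrt_pos.mpr Real.pi_pos
  have h1 : HasDerivAt (fun ν : ℝ => β * ν ^ 2) (β * (2 * ν ^ 1)) ν :=
    (hasDerivAt_pow 2 ν).const_mul β
  have hin : HasDerivAt (fun ν : ℝ => ν / Real.sqrt 2) (1 / Real.sqrt 2) ν :=
    (hasDerivAt_id ν).div_const _
  have herf : HasDerivAt (fun ν : ℝ => erf (ν / Real.sqrt 2))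
      ((2 / Real.sqrt Real.pi * Real.exp (-(ν / Real.sqrt 2) ^ 2)) * (1 / Real.sqrt 2)) ν :=
    (erf_hasDerivAt _).comp ν hin
  have herfc : HasDerivAt (fun ν : ℝ => erfc (ν / Real.sqrt 2))
      (0 - (2 / Real.sqrt Real.pi * Real.exp (-(ν / Real.sqrt 2) ^ 2)) * (1 / Real.sqrt 2)) ν :=
    (hasDerivAt_const ν 1).sub herf
  have hq : HasDerivAt (fun ν : ℝ => 1 - ν ^ 2) (0 - 2 * ν ^ 1) ν :=
    (hasDerivAt_const ν 1).sub (hasDerivAt_pow 2 ν)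
  have hB := herfc.mul hq
  have hexp : HasDerivAt (fun ν : ℝ => Real.exp (-ν ^ 2 / 2))
      (Real.exp (-ν ^ 2 / 2) * (-(2 * ν ^ 1) / 2)) ν :=
    (((hasDerivAt_pow 2 ν).neg.div_const 2)).exp
  have hlin : HasDerivAt (fun ν : ℝ => 2 * ν / Real.sqrt (2 * Real.pi))
      (2 * 1 / Real.sqrt (2 * Real.pi)) ν :=
    (((hasDerivAt_id ν).const_mul 2)).div_const _
  have hC := hlin.mul hexp
  have htot := (h1.add hB).add hC
  refine htot.congr_deriv (Eq.symm ?_)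
  have hsq : (ν / Real.sqrt 2) ^ 2 = ν ^ 2 / 2 := by
    rw [div_pow, Real.sq_sqrt (by norm_num : (0:ℝ) ≤ 2)]
  have h2π : Real.sqrt (2 * Real.pi) = Real.sqrt 2 * Real.sqrt Real.pi :=
    Real.sqrt_mul (by norm_num) _
  have hs2 : Real.sqrt 2 * Real.sqrt 2 = 2 := Real.mul_self_sqrt (by norm_num)
  rw [hsq, h2π]
  simp only [neg_div, pow_one]
  field_simp
  ring_nf

theorem stmt11 (β : ℝ) (hβ : β ∈ Set.Ioo (0:ℝ) 1) :
    let F : ℝ → ℝ := fun ν => β * ν ^ 2 + erfc (ν / Real.sqrt 2) * (1 - ν ^ 2) +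
      (2 * ν / Real.sqrt (2 * Real.pi)) * Real.exp (-ν ^ 2 / 2)
    let νs : ℝ := Real.sqrt 2 * erfinv (1 - β)
    0 ≤ νs ∧ (∀ ν, 0 ≤ ν → F νs ≤ F ν) ∧
      F νs = β + 2 * erfinv (1 - β) / (Real.sqrt Real.pi * Real.exp (erfinv (1 - β) ^ 2)) := by
  intro F νs
  have hy : (1 - β) ∈ Set.Ioo (0:ℝ) 1 := ⟨by linarith [hβ.2], by linarith [hβ.1]⟩
  set a := erfinv (1 - β) with ha_def
  have ha : erf a = 1 - β := erf_erfinv hy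
  have hapos : 0 < a := erfinv_pos hy
  have hs2 : (0:ℝ) < Real.sqrt 2 := by positivity
  have hπ : (0:ℝ) < Real.sqrt Real.pi := Real.sqrt_pos.mpr Real.pi_pos
  have hνs : νs = Real.sqrt 2 * a := rfl
  have hνs0 : 0 ≤ νs := by rw [hνs]; positivity
  have hdiv : νs / Real.sqrt 2 = a := by
    rw [hνs, mul_comm, mul_div_assoc, div_self (ne_of_gt hs2), mul_one]
  have hgstar : erfc (νs / Real.sqrt 2) = β := by
    rw [hdiv, erfc, ha]; ring
  have hFd : ∀ x : ℝ, HasDerivAt F (2 * x * (β - erfc (x / Real.sqrt 2))) x :=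
    fun x => F_hasDerivAt β x
  have hFc : Continuous F := by
    have : Differentiable ℝ F := fun x => (hFd x).differentiableAt
    exact this.continuous
  -- erfc comparison lemmas
  have hmono : ∀ x : ℝ, x ≤ νs → β ≤ erfc (x / Real.sqrt 2) := by
    intro x hx
    have : erf (x / Real.sqrt 2) ≤ erf a := by
      apply erf_strictMono.monotone
      rw [← hdiv]; gcongr
    rw [ha] at this
    simp only [erfc]; linarith
  have hmono' : ∀ x : ℝ, νs ≤ x → erfc (x / Real.sqrt 2) ≤ β := by
    intro x hx
    have : erf a ≤ erf (x / Real.sqrt 2) := by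
      apply erf_strictMono.monotone
      rw [← hdiv]; gcongr
    rw [ha] at this
    simp only [erfc]; linarith
  have hanti : AntitoneOn F (Set.Icc 0 νs) := by
    apply antitoneOn_of_deriv_nonpos (convex_Icc 0 νs) hFc.continuousOn
      (fun x _ => (hFd x).differentiableAt.differentiableWithinAt)
    intro x hx
    rw [interior_Icc] at hx
    rw [(hFd x).deriv]
    have h1 := hmono x hx.2.le
    nlinarith [hx.1]
  have hmonoF : MonotoneOn F (Set.Ici νs) := by
    apply monotoneOn_of_deriv_nonneg (convex_Ici νs) hFc.continuousOn
      (fun x _ => (hFd x).differentiableAt.differentiableWithinAt)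
    intro x hx
    rw [interior_Ici] at hx
    rw [(hFd x).deriv]
    have h1 := hmono' x hx.le
    nlinarith [lt_of_le_of_lt hνs0 hx]
  refine ⟨hνs0, fun ν hν => ?_, ?_⟩
  · rcases le_total ν νs with h | h
    · exact hanti ⟨hν, h⟩ ⟨hνs0, le_refl _⟩ h  -- careful direction
    · exact hmonoF Set.self_mem_Ici h h
  · -- value computation
    have hsq : νs ^ 2 = 2 * a ^ 2 := by
      rw [hνs, mul_pow, Real.sq_sqrt (by norm_num : (0:ℝ) ≤ 2)]
    have h2π : Real.sqrt (2 * Real.pi) = Real.sqrt 2 * Real.sqrt Real.pi :=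
      Real.sqrt_mul (by norm_num) _
    show β * νs ^ 2 + erfc (νs / Real.sqrt 2) * (1 - νs ^ 2) +
        (2 * νs / Real.sqrt (2 * Real.pi)) * Real.exp (-νs ^ 2 / 2)
        = β + 2 * a / (Real.sqrt Real.pi * Real.exp (a ^ 2))
    rw [hgstar, hsq, hνs, h2π]
    have hexp : Real.exp (-(2 * a ^ 2) / 2) = 1 / Real.exp (a ^ 2) := by
      rw [eq_div_iff (Real.exp_ne_zero _), ← Real.exp_add]
      ring_nf
      exact Real.exp_zero
    rw [hexp]
    have he : Real.exp (a ^ 2) ≠ 0 := Real.exp_ne_zero _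
    field_simp
    ring
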